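/- Let (X,d) be a metric space and g : X → X an isometry such that the displacement ρ := inf_{y∈X} d(y, g(y)) is attained at some point x ∈ X. Let f : ℝ → X be a map such that f(0) = x, f(t + ρ) = g(f(t)) for all t ∈ ℝ, and the restriction of f to [0,ρ] is a geodesic segment, i.e. d(f(s),f(t)) = |s−t| for all s,t ∈ [0,ρ]. Then f is a ρ-local geodesic: d(f(s),f(t)) = |s−t| for all s,t ∈ ℝ with |s−t| ≤ ρ. -/

import Mathlib

/-- let `g` be an isometry of a metric space whose displacement
`ρ = inf_y d(y, g y)` is attained at `x`, and let `f : ℝ → X` satisfy `f 0 = x`,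
`f (t+ρ) = g (f t)`, with `f` geodesic on `[0,ρ]`.  Then `f` is a `ρ`-local geodesic. -/
theorem local_geodesic_of_axis {X : Type} [MetricSpace X]
    (g : X → X) (hgiso : Isometry g) (hgbij : Function.Bijective g)
    (ρ : ℝ) (x : X)
    (hx : dist x (g x) = ρ)
    (hmin : ∀ y : X, ρ ≤ dist y (g y))
    (f : ℝ → X)
    (hf0 : f 0 = x)
    (hfper : ∀ t : ℝ, f (t + ρ) = g (f t))
    (hfgeo : ∀ s t : ℝ, s ∈ Set.Icc (0:ℝ) ρ → t ∈ Set.Icc (0:ℝ) ρ →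
      dist (f s) (f t) = |s - t|) :
    ∀ s t : ℝ, |s - t| ≤ ρ → dist (f s) (f t) = |s - t| := by
  have hρ0 : 0 ≤ ρ := hx ▸ dist_nonneg
  rcases eq_or_lt_of_le hρ0 with hρ | hρ
  · intro s t hst
    rw [← hρ] at hst
    have hst0 : |s - t| = 0 := le_antisymm hst (abs_nonneg _)
    have : s = t := by have := abs_eq_zero.mp hst0; linarith
    subst this; simp [hst0]
  · have shift : ∀ u v : ℝ, dist (f (u + ρ)) (f (v + ρ)) = dist (f u) (f v) := by
      intro u v; rw [hfper, hfper, hgiso.dist_eq]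
    have shiftZ : ∀ (n : ℤ) (u v : ℝ),
        dist (f (u + n * ρ)) (f (v + n * ρ)) = dist (f u) (f v) := by
      intro n
      induction n using Int.induction_on with
      | zero => simp
      | succ k ih =>
          intro u v
          have h1 : (u + ((k : ℤ) + 1 : ℤ) * ρ) = (u + (k : ℤ) * ρ) + ρ := by
            push_cast; ring
          have h2 : (v + ((k : ℤ) + 1 : ℤ) * ρ) = (v + (k : ℤ) * ρ) + ρ := by
            push_cast; ring
          rw [h1, h2, shift, ih]
      | pred k ih =>
          intro u v
          rw [← shift,
            show u + ((-(k : ℤ) - 1 : ℤ) : ℝ) * ρ + ρ = u + ((-(k : ℤ) : ℤ) : ℝ) * ρ by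
              push_cast; ring,
            show v + ((-(k : ℤ) - 1 : ℤ) : ℝ) * ρ + ρ = v + ((-(k : ℤ) : ℤ) : ℝ) * ρ by
              push_cast; ring]
          exact ih u v
    -- main argument, wlog s ≤ t
    have main : ∀ s t : ℝ, s ≤ t → t - s ≤ ρ → dist (f s) (f t) = t - s := by
      intro s t hle hts
      set n : ℤ := ⌊s / ρ⌋ with hn
      have h1 : (n : ℝ) * ρ ≤ s := by
        have := Int.floor_le (s / ρ)
        calc (n : ℝ) * ρ ≤ (s / ρ) * ρ := by nlinarith
        _ = s := by field_simp
      have h2 : s < ((n : ℝ) + 1) * ρ := by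
        have := Int.lt_floor_add_one (s / ρ)
        calc s = (s / ρ) * ρ := by field_simp
        _ < ((n : ℝ) + 1) * ρ := by nlinarith
      set s' := s - (n : ℝ) * ρ with hs'
      set t' := t - (n : ℝ) * ρ with ht'
      have hsub : dist (f s) (f t) = dist (f s') (f t') := by
        have h := shiftZ n s' t'
        rw [show s' + (n : ℝ) * ρ = s by simp [hs'],
          show t' + (n : ℝ) * ρ = t by simp [ht']] at h
        exact h
      have hs'0 : 0 ≤ s' := by simp [hs']; linarith
      have hs'ρ : s' < ρ := by simp [hs']; linarith
      have hst' : t' - s' = t - s := by simp [hs', ht']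
      have ht'0 : s' ≤ t' := by simp [hs', ht']; linarith
      rcases le_or_gt t' ρ with hcase | hcase
      · rw [hsub, hfgeo s' t' ⟨hs'0, hs'ρ.le⟩ ⟨le_trans hs'0 ht'0, hcase⟩,
          abs_of_nonpos (by linarith)]
        linarith
      · -- ρ < t' ≤ s' + ρ
        have ht'2 : t' ≤ s' + ρ := by linarith
        have hd1 : dist (f s') (f ρ) = ρ - s' := by
          rw [hfgeo s' ρ ⟨hs'0, hs'ρ.le⟩ ⟨hρ.le, le_rfl⟩, abs_of_nonpos (by linarith)]
          ring
        have hd2 : dist (f ρ) (f t') = t' - ρ := by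
          have h0 : (ρ : ℝ) = 0 + ρ := by ring
          have h0' : t' = (t' - ρ) + ρ := by ring
          rw [h0, h0', shift, hfgeo 0 (t' - ρ) ⟨le_rfl, hρ.le⟩ ⟨by linarith, by linarith⟩,
            abs_of_nonpos (by linarith)]
          ring
        have hub : dist (f s') (f t') ≤ t' - s' := by
          calc dist (f s') (f t') ≤ dist (f s') (f ρ) + dist (f ρ) (f t') := dist_triangle _ _ _
          _ = t' - s' := by rw [hd1, hd2]; ring
        have hd3 : dist (f t') (f (s' + ρ)) = s' + ρ - t' := by
          have h0' : t' = (t' - ρ) + ρ := by ring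
          rw [h0', shift, hfgeo (t' - ρ) s' ⟨by linarith, by linarith⟩ ⟨hs'0, hs'ρ.le⟩,
            abs_of_nonpos (by linarith)]
          ring
        have hlb : ρ ≤ dist (f s') (f t') + (s' + ρ - t') := by
          calc ρ ≤ dist (f s') (g (f s')) := hmin _
          _ = dist (f s') (f (s' + ρ)) := by rw [hfper]
          _ ≤ dist (f s') (f t') + dist (f t') (f (s' + ρ)) := dist_triangle _ _ _
          _ = dist (f s') (f t') + (s' + ρ - t') := by rw [hd3]
        rw [hsub]
        linarith
    intro s t hst
    rcases le_total s t with hle | hle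
    · rw [abs_of_nonpos (by linarith)] at hst ⊢
      rw [main s t hle (by linarith)]; ring
    · rw [abs_of_nonneg (by linarith)] at hst ⊢
      rw [dist_comm, main t s hle (by linarith)]
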